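/- For the logarithmic mean θ and positive reals s, t, r, the 2×2 symmetric matrix M with M₁₁ = ∂₁θ(s,t)(r−s) + ∂₁θ(t,s)(s−t) + 2θ(t,s), M₁₂ = θ(s,t) + θ(s,r), and M₂₂ = ∂₁θ(s,r)(t−s) + ∂₁θ(r,s)(s−r) + 2θ(r,s) is diagonally dominant, i.e., M₁₁ ≥ M₁₂ ≥ 0 and M₂₂ ≥ M₁₂ ≥ 0. -/

import Mathlib

noncomputable def logMean (s t : ℝ) : ℝ := ∫ a in (0:ℝ)..1, s ^ a * t ^ (1 - a)

noncomputable def d1θ (s t : ℝ) : ℝ := deriv (fun u => logMean u t) s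

open MeasureTheory Real intervalIntegral Metric

lemma cont_rpow_exp {c : ℝ} (hc : 0 < c) : Continuous (fun a : ℝ => c ^ a) := by
  have : (fun a : ℝ => c ^ a) = fun a => Real.exp (Real.log c * a) := by
    funext a; rw [Real.rpow_def_of_pos hc]
  rw [this]; exact Real.continuous_exp.comp (continuous_const.mul continuous_id)

/-- The first partial derivative of the logarithmic mean, as an integral. -/
noncomputable def Aθ (s t : ℝ) : ℝ := ∫ a in (0:ℝ)..1, a * s ^ (a - 1) * t ^ (1 - a)

lemma contA {s t : ℝ} (hs : 0 < s) (ht : 0 < t) :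
    Continuous (fun a : ℝ => a * s ^ (a - 1) * t ^ (1 - a)) := by
  apply Continuous.mul
  · exact continuous_id.mul ((cont_rpow_exp hs).comp (continuous_id.sub continuous_const))
  · exact (cont_rpow_exp ht).comp (continuous_const.sub continuous_id)

lemma contB {s t : ℝ} (hs : 0 < s) (ht : 0 < t) :
    Continuous (fun a : ℝ => (1 - a) * s ^ a * t ^ (-a)) := by
  apply Continuous.mul
  · exact (continuous_const.sub continuous_id).mul (cont_rpow_exp hs)
  · exact (cont_rpow_exp ht).comp continuous_neg

lemma contM {s t : ℝ} (hs : 0 < s) (ht : 0 < t) :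
    Continuous (fun a : ℝ => s ^ a * t ^ (1 - a)) :=
  (cont_rpow_exp hs).mul ((cont_rpow_exp ht).comp (continuous_const.sub continuous_id))

lemma logMean_symm (s t : ℝ) : logMean s t = logMean t s := by
  unfold logMean
  have h := intervalIntegral.integral_comp_sub_left (a := (0:ℝ)) (b := 1)
    (fun a : ℝ => t ^ a * s ^ (1 - a)) 1
  simp only [sub_zero, sub_self] at h
  rw [← h]
  congr 1; funext a; ring_nf

lemma logMean_nonneg {s t : ℝ} (hs : 0 < s) (ht : 0 < t) : 0 ≤ logMean s t := by
  unfold logMean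
  apply intervalIntegral.integral_nonneg (by norm_num)
  intro a _; positivity

lemma Aθ_swap {s t : ℝ} (hs : 0 < s) (ht : 0 < t) :
    (∫ a in (0:ℝ)..1, (1 - a) * s ^ a * t ^ (-a)) = Aθ t s := by
  unfold Aθ
  have h := intervalIntegral.integral_comp_sub_left (a := (0:ℝ)) (b := 1)
    (fun a : ℝ => a * t ^ (a - 1) * s ^ (1 - a)) 1
  simp only [sub_zero, sub_self] at h
  rw [← h]
  congr 1; funext a; ring_nf

/-- Euler identity for the degree-one homogeneous function `logMean`. -/
lemma euler {s t : ℝ} (hs : 0 < s) (ht : 0 < t) :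
    s * Aθ s t + t * Aθ t s = logMean s t := by
  rw [← Aθ_swap hs ht]
  unfold Aθ logMean
  rw [← intervalIntegral.integral_const_mul, ← intervalIntegral.integral_const_mul,
    ← intervalIntegral.integral_add
      (((contA hs ht).intervalIntegrable 0 1).const_mul s)
      (((contB hs ht).intervalIntegrable 0 1).const_mul t)]
  congr 1; funext a
  have h1 : s * s ^ (a - 1) = s ^ a := by
    rw [show a = 1 + (a - 1) by ring, Real.rpow_add hs, Real.rpow_one]
    ring_nf
  have h2 : t * t ^ (-a) = t ^ (1 - a) := by
    rw [show (1:ℝ) - a = 1 + -a by ring, Real.rpow_add ht, Real.rpow_one]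
  linear_combination (a * t ^ (1 - a)) * h1 + ((1 - a) * s ^ a) * h2

lemma young_pt {s t u v a : ℝ} (hs : 0 < s) (ht : 0 < t) (hu : 0 < u) (hv : 0 < v)
    (ha : 0 ≤ a) (ha1 : a ≤ 1) :
    u ^ a * v ^ (1 - a) ≤
      u * (a * s ^ (a - 1) * t ^ (1 - a)) + v * ((1 - a) * s ^ a * t ^ (-a)) := by
  have hX : (0:ℝ) < s ^ a * t ^ (1 - a) := by positivity
  have hc : (0:ℝ) < u / s := by positivity
  have hd : (0:ℝ) < v / t := by positivity
  have young : (u/s) ^ a * (v/t) ^ (1-a) ≤ a * (u/s) + (1-a) * (v/t) :=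
    Real.geom_mean_le_arith_mean2_weighted ha (by linarith) hc.le hd.le (by ring)
  have h1 : u ^ a * v ^ (1 - a) = ((u/s) ^ a * (v/t) ^ (1-a)) * (s ^ a * t ^ (1-a)) := by
    rw [show (u/s) ^ a * (v/t) ^ (1-a) * (s ^ a * t ^ (1-a))
        = ((u/s) ^ a * s ^ a) * ((v/t) ^ (1-a) * t ^ (1-a)) by ring,
      ← Real.mul_rpow hc.le hs.le, ← Real.mul_rpow hd.le ht.le,
      div_mul_cancel₀ _ hs.ne', div_mul_cancel₀ _ ht.ne']
  have h2 : u * (a * s ^ (a-1) * t ^ (1-a)) = (a * (u/s)) * (s ^ a * t ^ (1-a)) := by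
    rw [show a - 1 = a + -1 by ring, Real.rpow_add hs, Real.rpow_neg_one]
    field_simp
  have h3 : v * ((1-a) * s ^ a * t ^ (-a)) = ((1-a) * (v/t)) * (s ^ a * t ^ (1-a)) := by
    have : t ^ (1-a : ℝ) = t ^ (-a : ℝ) * t := by
      rw [show (1:ℝ) - a = -a + 1 by ring, Real.rpow_add ht, Real.rpow_one]
    rw [this]; field_simp
  calc u ^ a * v ^ (1 - a) = ((u/s) ^ a * (v/t) ^ (1-a)) * (s ^ a * t ^ (1-a)) := h1
    _ ≤ (a * (u/s) + (1-a) * (v/t)) * (s ^ a * t ^ (1-a)) :=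
        mul_le_mul_of_nonneg_right young hX.le
    _ = _ := by rw [h2, h3]; ring

/-- The tangent-plane inequality coming from concavity of `logMean`. -/
lemma tangent {s t u v : ℝ} (hs : 0 < s) (ht : 0 < t) (hu : 0 < u) (hv : 0 < v) :
    logMean u v ≤ u * Aθ s t + v * Aθ t s := by
  rw [← Aθ_swap hs ht]
  unfold Aθ logMean
  rw [← intervalIntegral.integral_const_mul, ← intervalIntegral.integral_const_mul,
    ← intervalIntegral.integral_add
      (((contA hs ht).intervalIntegrable 0 1).const_mul u)
      (((contB hs ht).intervalIntegrable 0 1).const_mul v)]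
  apply intervalIntegral.integral_mono_on (by norm_num)
    ((contM hu hv).intervalIntegrable 0 1)
    (((continuous_const.mul (contA hs ht)).add
      (continuous_const.mul (contB hs ht))).intervalIntegrable 0 1)
  intro a ha
  exact young_pt hs ht hu hv ha.1 ha.2

lemma rpow_le_max_neg {c w : ℝ} (hc : 0 < c) (hw : -1 ≤ w) (hw0 : w ≤ 0) :
    c ^ w ≤ max c⁻¹ 1 := by
  rcases le_total c 1 with h | h
  · refine le_trans ?_ (le_max_left _ _)
    rw [← Real.rpow_neg_one c]
    exact Real.rpow_le_rpow_of_exponent_ge hc h hw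
  · exact le_trans (Real.rpow_le_one_of_one_le_of_nonpos h hw0) (le_max_right _ _)

lemma rpow_le_max_pos {c w : ℝ} (hc : 0 < c) (hw : 0 ≤ w) (hw1 : w ≤ 1) :
    c ^ w ≤ max c 1 := by
  rcases le_total c 1 with h | h
  · exact le_trans (Real.rpow_le_one hc.le h hw) (le_max_right _ _)
  · refine le_trans ?_ (le_max_left _ _)
    nth_rewrite 2 [← Real.rpow_one c]
    exact Real.rpow_le_rpow_of_exponent_le h hw1

/-- Differentiation under the integral sign: `∂₁ logMean = Aθ`. -/
lemma hasDerivAt_logMean {s t : ℝ} (hs : 0 < s) (ht : 0 < t) :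
    HasDerivAt (fun u => logMean u t) (Aθ s t) s := by
  unfold logMean Aθ
  have ε_pos : (0:ℝ) < s / 2 := by positivity
  have hball : ∀ x ∈ ball s (s/2), s/2 < x := by
    intro x hx
    rw [mem_ball, Real.dist_eq, abs_lt] at hx
    linarith [hx.1]
  refine (intervalIntegral.hasDerivAt_integral_of_dominated_loc_of_deriv_le
    (F := fun x (a : ℝ) => x ^ a * t ^ (1 - a))
    (F' := fun x (a : ℝ) => a * x ^ (a - 1) * t ^ (1 - a))
    (bound := fun _ => max (s/2)⁻¹ 1 * max t 1) (ball_mem_nhds s ε_pos) ?_ ?_ ?_ ?_ ?_ ?_).2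
  · filter_upwards [Ioi_mem_nhds hs] with x hx
    exact (contM hx ht).aestronglyMeasurable
  · exact (contM hs ht).intervalIntegrable 0 1
  · exact (contA hs ht).aestronglyMeasurable
  · refine Filter.Eventually.of_forall (fun a ha x hx => ?_)
    rw [Set.uIoc_of_le (by norm_num : (0:ℝ) ≤ 1)] at ha
    have hx0 : 0 < x := lt_trans ε_pos (hball x hx)
    have h1 : x ^ (a - 1) ≤ max (s/2)⁻¹ 1 := by
      refine le_trans (Real.rpow_le_rpow_of_nonpos ε_pos (hball x hx).le (by linarith [ha.2])) ?_
      exact rpow_le_max_neg ε_pos (by linarith [ha.1]) (by linarith [ha.2])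
    have h2 : t ^ (1 - a) ≤ max t 1 := rpow_le_max_pos ht (by linarith [ha.2]) (by linarith [ha.1])
    have hn : ‖a * x ^ (a - 1) * t ^ (1 - a)‖ = a * x ^ (a - 1) * t ^ (1 - a) := by
      rw [Real.norm_eq_abs, abs_of_nonneg]
      exact mul_nonneg (mul_nonneg ha.1.le (by positivity)) (by positivity)
    rw [hn]
    calc a * x ^ (a - 1) * t ^ (1 - a) ≤ 1 * x ^ (a - 1) * t ^ (1 - a) := by
          apply mul_le_mul_of_nonneg_right (mul_le_mul_of_nonneg_right ha.2 (by positivity))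
          positivity
      _ = x ^ (a - 1) * t ^ (1 - a) := by ring
      _ ≤ max (s/2)⁻¹ 1 * max t 1 := by
          apply mul_le_mul h1 h2 (by positivity) (by positivity)
  · exact intervalIntegrable_const
  · refine Filter.Eventually.of_forall (fun a _ x hx => ?_)
    have hx0 : 0 < x := lt_trans ε_pos (hball x hx)
    exact (Real.hasDerivAt_rpow_const (Or.inl hx0.ne')).mul_const _

lemma d1θ_eq {s t : ℝ} (hs : 0 < s) (ht : 0 < t) : d1θ s t = Aθ s t := by
  unfold d1θ
  exact (hasDerivAt_logMean hs ht).deriv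

/-- The 2×2 matrix arising in the pointwise off-diagonal estimate is diagonally
dominant: `M₁₁ ≥ M₁₂ ≥ 0` and `M₂₂ ≥ M₁₂ ≥ 0`. -/
theorem pointwise_matrix_diag_dominant (s t r : ℝ) (hs : 0 < s) (ht : 0 < t) (hr : 0 < r) :
    (d1θ s t * (r - s) + d1θ t s * (s - t) + 2 * logMean t s ≥ logMean s t + logMean s r)
    ∧ (logMean s t + logMean s r ≥ 0)
    ∧ (d1θ s r * (t - s) + d1θ r s * (s - r) + 2 * logMean r s ≥ logMean s t + logMean s r) := by
  rw [d1θ_eq hs ht, d1θ_eq ht hs, d1θ_eq hs hr, d1θ_eq hr hs]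
  have e1 := euler hs ht
  have e2 := euler hs hr
  have tg1 : logMean r s ≤ r * Aθ s t + s * Aθ t s := tangent hs ht hr hs
  have tg2 : logMean t s ≤ t * Aθ s r + s * Aθ r s := tangent hs hr ht hs
  have sy1 := logMean_symm t s
  have sy2 := logMean_symm r s
  have sy3 := logMean_symm s r
  have n1 := logMean_nonneg hs ht
  have n2 := logMean_nonneg hs hr
  refine ⟨by linarith, by linarith, by linarith⟩
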